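/- (Norm monotonicity of the SARAH directions, used via Lemma 3 of Nguyen et al.) Assume each f_i is convex and 0 < η ≤ 2/L. Fix a permutation π of {1,…,n}, a start point u ∈ ℝ^d and an initial direction g ∈ ℝ^d, and run a SARAH epoch: w⁰ = u, v⁰ = g, and for i = 1,…,n: wⁱ = w^{i−1} − η·v^{i−1}, vⁱ = v^{i−1} + ∇f_{π(i)}(wⁱ) − ∇f_{π(i)}(w^{i−1}). Then ‖vⁱ‖ ≤ ‖v^{i−1}‖ for every i ∈ {1,…,n}; in particular ‖vⁱ‖ ≤ ‖g‖ for all i. -/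

import Mathlib

open scoped BigOperators

open Set

section aux

variable {E : Type*} [NormedAddCommGroup E] [InnerProductSpace ℝ E] [CompleteSpace E]

local notation "⟪" x ", " y "⟫" => @inner ℝ _ _ x y

private lemma hasDerivAt_line (f : E → ℝ) (hf : Differentiable ℝ f) (x y : E) (t : ℝ) :
    HasDerivAt (fun s : ℝ => f (x + s • (y - x)))
      ⟪gradient f (x + t • (y - x)), y - x⟫ t := by
  have h1 : HasDerivAt (fun s : ℝ => x + s • (y - x)) (y - x) t := by
    simpa using ((hasDerivAt_id t).smul_const (y - x)).const_add x
  have h2 := ((hf _).hasGradientAt.hasFDerivAt).comp_hasDerivAt t h1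
  exact h2.congr_deriv (by simp [gradient, InnerProductSpace.toDual_apply_apply])

/-- Linear lower bound for a convex differentiable function. -/
private lemma grad_lower (f : E → ℝ) (hf : Differentiable ℝ f)
    (hconv : ConvexOn ℝ Set.univ f) (x y : E) :
    f x + ⟪gradient f x, y - x⟫ ≤ f y := by
  set g : ℝ → ℝ := fun s => f (x + s • (y - x)) with hg
  have hgconv : ConvexOn ℝ Set.univ g := by
    have := hconv.comp_affineMap (AffineMap.lineMap x y)
    have heq : (f ∘ (AffineMap.lineMap x y : ℝ →ᵃ[ℝ] E)) = g := by
      funext s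
      simp [g, AffineMap.lineMap_apply, add_comm]
    rw [heq] at this
    simpa using this
  have hd0 : HasDerivAt g ⟪gradient f (x + (0:ℝ) • (y - x)), y - x⟫ 0 :=
    hasDerivAt_line f hf x y 0
  have := hgconv.le_slope_of_hasDerivAt (Set.mem_univ (0:ℝ)) (Set.mem_univ (1:ℝ))
    one_pos hd0
  have hslope : slope g 0 1 = g 1 - g 0 := by
    simp [slope_def_field]
  rw [hslope] at this
  have hg0 : g 0 = f x := by simp [g]
  have hg1 : g 1 = f y := by simp [g]
  simp only [zero_smul, add_zero] at this
  rw [hg0, hg1] at this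
  linarith

/-- Descent lemma for an L-Lipschitz gradient. -/
private lemma grad_descent (f : E → ℝ) (hf : Differentiable ℝ f) (L : ℝ) (hL : 0 < L)
    (hLip : ∀ a b, ‖gradient f a - gradient f b‖ ≤ L * ‖a - b‖) (x y : E) :
    f y ≤ f x + ⟪gradient f x, y - x⟫ + L / 2 * ‖y - x‖ ^ 2 := by
  set c : ℝ := ⟪gradient f x, y - x⟫ with hc
  set h : ℝ → ℝ := fun t => f (x + t • (y - x)) - t * c - L / 2 * ‖y - x‖ ^ 2 * t ^ 2
    with hh
  have hder : ∀ t : ℝ, HasDerivAt h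
      (⟪gradient f (x + t • (y - x)), y - x⟫ - c - L * ‖y - x‖ ^ 2 * t) t := by
    intro t
    have h1 := hasDerivAt_line f hf x y t
    have h2 : HasDerivAt (fun t : ℝ => t * c) c t := by
      simpa using (hasDerivAt_id t).mul_const c
    have h3 : HasDerivAt (fun t : ℝ => L / 2 * ‖y - x‖ ^ 2 * t ^ 2)
        (L / 2 * ‖y - x‖ ^ 2 * (2 * t)) t := by
      simpa using (hasDerivAt_pow 2 t).const_mul (L / 2 * ‖y - x‖ ^ 2)
    have := (h1.sub h2).sub h3
    exact this.congr_deriv (by ring)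
  have hnonpos : ∀ t ∈ interior (Set.Icc (0:ℝ) 1), deriv h t ≤ 0 := by
    intro t ht
    rw [interior_Icc] at ht
    rw [(hder t).deriv]
    have hCS : ⟪gradient f (x + t • (y - x)) - gradient f x, y - x⟫
        ≤ ‖gradient f (x + t • (y - x)) - gradient f x‖ * ‖y - x‖ :=
      real_inner_le_norm _ _
    have hlip := hLip (x + t • (y - x)) x
    have hdist : ‖x + t • (y - x) - x‖ = t * ‖y - x‖ := by
      rw [add_sub_cancel_left, norm_smul, Real.norm_eq_abs, abs_of_pos ht.1]
    rw [hdist] at hlip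
    have hsub : ⟪gradient f (x + t • (y - x)) - gradient f x, y - x⟫
        = ⟪gradient f (x + t • (y - x)), y - x⟫ - c := by
      rw [inner_sub_left]
    have hnn : (0:ℝ) ≤ ‖y - x‖ := norm_nonneg _
    nlinarith [hCS, hlip, hsub, mul_le_mul_of_nonneg_right hlip hnn]
  have hanti : AntitoneOn h (Set.Icc (0:ℝ) 1) := by
    apply antitoneOn_of_deriv_nonpos (convex_Icc 0 1)
    · exact (Continuous.continuousOn (by
        have : Differentiable ℝ h := fun t => (hder t).differentiableAt
        exact this.continuous))
    · intro t ht
      exact ((hder t).differentiableAt).differentiableWithinAt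
    · exact hnonpos
  have := hanti (Set.left_mem_Icc.mpr zero_le_one) (Set.right_mem_Icc.mpr zero_le_one)
    zero_le_one
  have h0 : h 0 = f x := by simp [h]
  have h1 : h 1 = f y - c - L / 2 * ‖y - x‖ ^ 2 := by simp [h]
  rw [h0, h1] at this
  linarith

/-- One-sided co-coercivity bound. -/
private lemma half_coco (f : E → ℝ) (hf : Differentiable ℝ f)
    (hconv : ConvexOn ℝ Set.univ f) (L : ℝ) (hL : 0 < L)
    (hLip : ∀ a b, ‖gradient f a - gradient f b‖ ≤ L * ‖a - b‖) (x y : E) :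
    f x ≤ f y + ⟪gradient f x, x - y⟫
      - 1 / (2 * L) * ‖gradient f x - gradient f y‖ ^ 2 := by
  set δ : E := gradient f x - gradient f y with hδ
  set z : E := y + L⁻¹ • δ with hz
  have hA : f x + ⟪gradient f x, z - x⟫ ≤ f z := grad_lower f hf hconv x z
  have hB : f z ≤ f y + ⟪gradient f y, z - y⟫ + L / 2 * ‖z - y‖ ^ 2 :=
    grad_descent f hf L hL hLip y z
  have hzy : z - y = L⁻¹ • δ := by simp [z]
  have hnorm : ‖z - y‖ ^ 2 = L⁻¹ ^ 2 * ‖δ‖ ^ 2 := by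
    rw [hzy, norm_smul, mul_pow, Real.norm_eq_abs, sq_abs]
  have hinner1 : ⟪gradient f x, z - x⟫
      = ⟪gradient f x, y - x⟫ + L⁻¹ * ⟪gradient f x, δ⟫ := by
    have : z - x = (y - x) + L⁻¹ • δ := by
      simp [z]; abel
    rw [this, inner_add_right, real_inner_smul_right]
  have hinner2 : ⟪gradient f y, z - y⟫ = L⁻¹ * ⟪gradient f y, δ⟫ := by
    rw [hzy, real_inner_smul_right]
  have hδδ : ⟪gradient f x, δ⟫ - ⟪gradient f y, δ⟫ = ‖δ‖ ^ 2 := by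
    rw [← inner_sub_left, ← hδ, real_inner_self_eq_norm_sq]
  have hxy : ⟪gradient f x, x - y⟫ = - ⟪gradient f x, y - x⟫ := by
    rw [← inner_neg_right]; congr 1; abel
  have hLne : L ≠ 0 := ne_of_gt hL
  rw [hinner1] at hA
  rw [hinner2, hnorm] at hB
  rw [hxy]
  have key : L / 2 * (L⁻¹ ^ 2 * ‖δ‖ ^ 2) - L⁻¹ * ‖δ‖ ^ 2
      = - (1 / (2 * L) * ‖δ‖ ^ 2) := by
    field_simp
    ring
  have hδδ' : L⁻¹ * ⟪gradient f x, δ⟫ - L⁻¹ * ⟪gradient f y, δ⟫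
      = L⁻¹ * ‖δ‖ ^ 2 := by
    rw [← mul_sub, hδδ]
  linarith [hA, hB, hδδ', key]

/-- Co-coercivity of the gradient of a convex L-smooth function. -/
private lemma coco (f : E → ℝ) (hf : Differentiable ℝ f)
    (hconv : ConvexOn ℝ Set.univ f) (L : ℝ) (hL : 0 < L)
    (hLip : ∀ a b, ‖gradient f a - gradient f b‖ ≤ L * ‖a - b‖) (x y : E) :
    1 / L * ‖gradient f x - gradient f y‖ ^ 2
      ≤ ⟪gradient f x - gradient f y, x - y⟫ := by
  have h1 := half_coco f hf hconv L hL hLip x y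
  have h2 := half_coco f hf hconv L hL hLip y x
  have hsymm : ‖gradient f y - gradient f x‖ = ‖gradient f x - gradient f y‖ := by
    rw [← neg_sub, norm_neg]
  rw [hsymm] at h2
  have hinner : ⟪gradient f x, x - y⟫ + ⟪gradient f y, y - x⟫
      = ⟪gradient f x - gradient f y, x - y⟫ := by
    rw [inner_sub_left]
    have : ⟪gradient f y, y - x⟫ = - ⟪gradient f y, x - y⟫ := by
      rw [← inner_neg_right]; congr 1; abel
    linarith [this]
  have hLne : L ≠ 0 := ne_of_gt hL
  have : 1 / L = 1 / (2 * L) + 1 / (2 * L) := by field_simp; ring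
  nlinarith [h1, h2, hinner]

end aux

/-- Norm monotonicity of the SARAH directions (Lemma 3 of Nguyen et al.). -/
theorem sarah_directions_norm_monotone
    {d n : ℕ} (hd : 1 ≤ d) (hn : 1 ≤ n)
    (f : Fin n → EuclideanSpace ℝ (Fin d) → ℝ)
    (L η : ℝ) (hL : 0 < L)
    (hdiff : ∀ i, Differentiable ℝ (f i))
    (hconv : ∀ i, ConvexOn ℝ Set.univ (f i))
    (hLip : ∀ i w₁ w₂, ‖gradient (f i) w₁ - gradient (f i) w₂‖ ≤ L * ‖w₁ - w₂‖)
    (hη0 : 0 < η) (hη : η ≤ 2 / L)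
    (π : Equiv.Perm (Fin n))
    (u g : EuclideanSpace ℝ (Fin d))
    -- one SARAH epoch: start point `u`, initial direction `g`, permutation `π`
    (W V : ℕ → EuclideanSpace ℝ (Fin d))
    (hW0 : W 0 = u) (hV0 : V 0 = g)
    (hWrec : ∀ i : Fin n, W ((i : ℕ) + 1) = W i - η • V i)
    (hVrec : ∀ i : Fin n, V ((i : ℕ) + 1)
      = V i + gradient (f (π i)) (W ((i : ℕ) + 1)) - gradient (f (π i)) (W i)) :
    (∀ i : Fin n, ‖V ((i : ℕ) + 1)‖ ≤ ‖V i‖) ∧ (∀ i : ℕ, i ≤ n → ‖V i‖ ≤ ‖g‖) := by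
  have step : ∀ i : Fin n, ‖V ((i : ℕ) + 1)‖ ≤ ‖V i‖ := by
    intro i
    set F := f (π i) with hF
    set δ : EuclideanSpace ℝ (Fin d) :=
      gradient F (W ((i : ℕ) + 1)) - gradient F (W i) with hδ
    have hv' : V ((i : ℕ) + 1) = V i + δ := by
      rw [hVrec i, hδ, hF]; abel
    have hcoco := coco F (hdiff (π i)) (hconv (π i)) L hL
      (fun a b => hLip (π i) a b) (W ((i : ℕ) + 1)) (W i)
    have hwd : W ((i : ℕ) + 1) - W i = -(η • V i) := by
      rw [hWrec i]; abel
    rw [hwd] at hcoco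
    have hinner : @inner ℝ _ _ δ (-(η • V i)) = -η * @inner ℝ _ _ δ (V i) := by
      rw [inner_neg_right, real_inner_smul_right]; ring
    rw [hinner] at hcoco
    -- hcoco : 1/L * ‖δ‖^2 ≤ -η * ⟪δ, V i⟫
    have hsq : ‖V ((i : ℕ) + 1)‖ ^ 2
        = ‖V i‖ ^ 2 + 2 * @inner ℝ _ _ (V i) δ + ‖δ‖ ^ 2 := by
      rw [hv']
      exact norm_add_sq_real (V i) δ
    have hcomm : @inner ℝ _ _ (V i) δ = @inner ℝ _ _ δ (V i) := real_inner_comm _ _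
    have hηL : η * L ≤ 2 := by
      have := mul_le_mul_of_nonneg_right hη (le_of_lt hL)
      rwa [div_mul_cancel₀ 2 (ne_of_gt hL)] at this
    have hδnn : (0:ℝ) ≤ ‖δ‖ ^ 2 := by positivity
    have e1 : η * ‖V ((i : ℕ) + 1)‖ ^ 2
        = η * ‖V i‖ ^ 2 + 2 * (η * @inner ℝ _ _ δ (V i)) + η * ‖δ‖ ^ 2 := by
      rw [hsq, hcomm]; ring
    have e2 : η * @inner ℝ _ _ δ (V i) ≤ - (1 / L * ‖δ‖ ^ 2) := by
      linarith [hcoco]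
    have e3 : η * ‖δ‖ ^ 2 - 2 / L * ‖δ‖ ^ 2 ≤ 0 := by
      nlinarith [mul_nonneg (sub_nonneg.2 hη) hδnn]
    have hdiv : (2:ℝ) / L = 2 * (1 / L) := by ring
    have hsqle : ‖V ((i : ℕ) + 1)‖ ^ 2 ≤ ‖V i‖ ^ 2 := by
      refine le_of_mul_le_mul_left ?_ hη0
      rw [hdiv] at e3
      linarith [e1, e2, e3]
    nlinarith [norm_nonneg (V ((i : ℕ) + 1)), norm_nonneg (V i), hsqle]
  refine ⟨step, ?_⟩
  intro i
  induction i with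
  | zero => intro _; rw [hV0]
  | succ k ih =>
    intro hk
    have hkn : k < n := Nat.lt_of_succ_le hk
    have := step ⟨k, hkn⟩
    simp only [Fin.val_mk] at this
    exact le_trans this (ih (le_of_lt hkn))
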